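/- Let A ⊆ Y with ∅ ≠ Cl₊A ≠ Y. Then the three sets Inf A, Inf A − Int C, and Inf A + Int C are pairwise disjoint. -/

import Mathlib

open Set Pointwise

variable {Y : Type*} [AddCommGroup Y] [Module ℝ Y] [TopologicalSpace Y]
  [IsTopologicalAddGroup Y] [ContinuousSMul ℝ Y]

/-- Upper closure of a set with respect to the cone `C`. -/
def upClo (C A : Set Y) : Set Y := closure (A + C)

/-- Weakly minimal elements of `A` with respect to the cone `C`. -/
def wMinSet (C A : Set Y) : Set Y := {y ∈ A | ({y} - interior C) ∩ A = ∅}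

/-- Infimal set of `A` with respect to the cone `C`. -/
def infSet (C A : Set Y) : Set Y := wMinSet C (upClo C A)

lemma cone_add_self {C : Set Y} (hC : Convex ℝ C)
    (hCone : ∀ r : ℝ, 0 < r → r • C ⊆ C) : C + C ⊆ C := by
  rintro x ⟨a, ha, b, hb, rfl⟩
  have h : (1/2 : ℝ) • a + (1/2 : ℝ) • b ∈ C :=
    hC ha hb (by norm_num) (by norm_num) (by norm_num)
  have h2 : (2:ℝ) • ((1/2 : ℝ) • a + (1/2 : ℝ) • b) ∈ C :=
    hCone 2 (by norm_num) (smul_mem_smul_set h)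
  have : (2:ℝ) • ((1/2 : ℝ) • a + (1/2 : ℝ) • b) = a + b := by
    rw [smul_add, smul_smul, smul_smul]; norm_num
  rwa [this] at h2

lemma int_add_int {C : Set Y} (hC : Convex ℝ C)
    (hCone : ∀ r : ℝ, 0 < r → r • C ⊆ C) :
    interior C + interior C ⊆ interior C :=
  interior_maximal
    ((add_subset_add interior_subset interior_subset).trans (cone_add_self hC hCone))
    (IsOpen.add_left isOpen_interior)

theorem stmt_4 (C A : Set Y) (hC : Convex ℝ C)
    (hCone : ∀ r : ℝ, 0 < r → r • C ⊆ C)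
    (hInt : (interior C).Nonempty) (hIntNe : interior C ≠ univ)
    (h1 : (upClo C A).Nonempty) (h2 : upClo C A ≠ univ) :
    Disjoint (infSet C A) (infSet C A - interior C) ∧
    Disjoint (infSet C A) (infSet C A + interior C) ∧
    Disjoint (infSet C A - interior C) (infSet C A + interior C) := by
  refine ⟨?_, ?_, ?_⟩
  · rw [Set.disjoint_left]
    rintro x ⟨hxU, hxE⟩ ⟨y, ⟨hyU, hyE⟩, c, hc, rfl⟩
    rw [Set.eq_empty_iff_forall_notMem] at hyE
    exact hyE (y - c) ⟨⟨y, rfl, c, hc, rfl⟩, hxU⟩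
  · rw [Set.disjoint_left]
    rintro x ⟨hxU, hxE⟩ ⟨y, ⟨hyU, hyE⟩, c, hc, rfl⟩
    rw [Set.eq_empty_iff_forall_notMem] at hxE
    exact hxE y ⟨⟨y + c, rfl, c, hc, by show y + c - c = y; abel⟩, hyU⟩
  · rw [Set.disjoint_left]
    rintro x ⟨y1, ⟨hy1U, hy1E⟩, c1, hc1, rfl⟩ ⟨y2, ⟨hy2U, hy2E⟩, c2, hc2, heq⟩
    rw [Set.eq_empty_iff_forall_notMem] at hy1E
    have hcc : c1 + c2 ∈ interior C := int_add_int hC hCone ⟨c1, hc1, c2, hc2, rfl⟩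
    refine hy1E y2 ⟨⟨y1, rfl, c1 + c2, hcc, ?_⟩, hy2U⟩
    have h3 : y2 = y1 - c1 - c2 := eq_sub_of_add_eq heq
    rw [h3]; abel
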